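/- arXiv:2311.10330 — 5 statements merged into one kernel-verified Lean document; each statement's English description precedes it below -/
import Mathlib

section
/- The disjoint union of t copies of the 4-cycle C_4 (t ≥ 1) is a distance magic graph with magic constant 4t+1. -/
open Finset
open scoped Classical

/-- The weight of a vertex `v`: the sum of the labels of its neighbors. -/
noncomputable def vertexWeight {V : Type} [Fintype V] (G : SimpleGraph V)
    (f : V → ℕ) (v : V) : ℕ :=
  ∑ u ∈ Finset.univ.filter (fun u => G.Adj v u), f u

/-- `G` is a distance magic graph with magic constant `k`: there is a bijective labeling of the
vertices by `{1, ..., n}` such that every vertex's neighborhood label-sum equals `k`. -/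
def IsDistanceMagic {V : Type} [Fintype V] (G : SimpleGraph V) (k : ℕ) : Prop :=
  ∃ f : V ≃ Fin (Fintype.card V),
    ∀ v : V, vertexWeight G (fun u => (f u : ℕ) + 1) v = k

/-- `k` is a magic constant: some (nonempty) graph realizes it. -/
def IsMagicConstant (k : ℕ) : Prop :=
  ∃ n : ℕ, 0 < n ∧ ∃ G : SimpleGraph (Fin n), IsDistanceMagic G k


/-- The disjoint union of `t` copies of the 4-cycle `C₄`. -/
def tC4graph (t : ℕ) : SimpleGraph (Fin t × Fin 4) where
  Adj x y := x.1 = y.1 ∧ (SimpleGraph.cycleGraph 4).Adj x.2 y.2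
  symm := ⟨fun x y h => ⟨h.1.symm, (SimpleGraph.cycleGraph 4).adj_symm h.2⟩⟩
  loopless := ⟨fun x h => (SimpleGraph.cycleGraph 4).irrefl h.2⟩

/-- label value -/
def lblv (t : ℕ) (j : Fin t) (i : Fin 4) : ℕ :=
  match i with
  | 0 => 2 * j
  | 1 => 2 * j + 1
  | 2 => 4 * t - 1 - 2 * j
  | 3 => 4 * t - 2 - 2 * j

lemma adj4 (i i' : Fin 4) :
    (SimpleGraph.cycleGraph 4).Adj i i' ↔ (i' = i + 1 ∨ i' = i - 1) := by revert i i'; decide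

lemma neq4 (i : Fin 4) : (i + 1 : Fin 4) ≠ i - 1 := by revert i; decide

/-- For `t ≥ 1`, `t C₄` is distance magic with magic constant `4t + 1`. -/
theorem tC4_distance_magic (t : ℕ) (ht : 1 ≤ t) :
    IsDistanceMagic (tC4graph t) (4 * t + 1) := by
  have hcard : Fintype.card (Fin t × Fin 4) = 4 * t := by
    simp [Fintype.card_prod, mul_comm]
  have hlt : ∀ (j : Fin t) (i : Fin 4), lblv t j i < Fintype.card (Fin t × Fin 4) := by
    rw [hcard]
    intro j i
    have hj := j.2
    fin_cases i <;> simp [lblv] <;> omega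
  set lbl : Fin t × Fin 4 → Fin (Fintype.card (Fin t × Fin 4)) :=
    fun p => ⟨lblv t p.1 p.2, hlt p.1 p.2⟩ with hlbl
  have hinj : Function.Injective lbl := by
    rintro ⟨j, i⟩ ⟨j', i'⟩ h
    simp only [hlbl, Fin.mk.injEq] at h
    have hj := j.2
    have hj' := j'.2
    have hjj : (j : ℕ) = (j' : ℕ) ∧ i = i' := by
      fin_cases i <;> fin_cases i' <;> simp_all [lblv] <;> omega
    exact Prod.ext (Fin.ext hjj.1) hjj.2
  have hbij : Function.Bijective lbl :=
    (Fintype.bijective_iff_injective_and_card lbl).2 ⟨hinj, by simp [hcard]⟩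
  refine ⟨Equiv.ofBijective lbl hbij, ?_⟩
  rintro ⟨j, i⟩
  have hfilter : Finset.univ.filter (fun u => (tC4graph t).Adj (j, i) u)
      = {(j, i + 1), (j, i - 1)} := by
    ext ⟨j', i'⟩
    simp only [Finset.mem_filter, Finset.mem_univ, true_and, tC4graph, adj4,
      Finset.mem_insert, Finset.mem_singleton, Prod.mk.injEq]
    constructor
    · rintro ⟨rfl, h | h⟩ <;> simp [h]
    · rintro (⟨rfl, rfl⟩ | ⟨rfl, rfl⟩) <;> simp
  have hne : ((j, i + 1) : Fin t × Fin 4) ≠ (j, i - 1) := by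
    simp [Prod.ext_iff, neq4 i]
  rw [vertexWeight, hfilter, Finset.sum_insert (by simp [hne]), Finset.sum_singleton]
  show (lbl (j, i + 1) : ℕ) + 1 + ((lbl (j, i - 1) : ℕ) + 1) = 4 * t + 1
  have hj := j.2
  fin_cases i <;> simp [hlbl, lblv, show (-1 : Fin 4) = 3 from rfl] <;> omega
end

section
/- If G is a distance magic graph on n vertices with magic constant k = n+1, then G is 2-regular. -/
open Finset
open scoped Classical

lemma neighborFinset_eq_filter' {V : Type} [Fintype V] (G : SimpleGraph V) (v : V) :
    G.neighborFinset v = Finset.univ.filter (fun u => G.Adj v u) := by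
  ext u; simp [SimpleGraph.mem_neighborFinset]

lemma sum_weights {V : Type} [Fintype V] (G : SimpleGraph V) (g : V → ℕ) :
    ∑ v, vertexWeight G g v = ∑ u, G.degree u * g u := by
  unfold vertexWeight
  simp only [Finset.sum_filter]
  rw [Finset.sum_comm]
  refine Finset.sum_congr rfl (fun u _ => ?_)
  have : ∀ v : V, (if G.Adj v u then g u else 0) = (if G.Adj u v then g u else 0) := by
    intro v; simp [SimpleGraph.adj_comm]
  simp only [this]
  rw [← Finset.sum_filter, Finset.sum_const, smul_eq_mul, SimpleGraph.degree,
    neighborFinset_eq_filter']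

/-- A distance magic graph with magic constant `k = n + 1` is `2`-regular. -/
theorem two_regular_of_magic_constant_n_add_one {V : Type} [Fintype V] (G : SimpleGraph V)
    (h : IsDistanceMagic G (Fintype.card V + 1)) :
    G.IsRegularOfDegree 2 := by
  obtain ⟨f, hf⟩ := h
  have hn : True := trivial
  set g : V → ℕ := fun u => (f u : ℕ) + 1 with hg
  have hgle : ∀ u, g u ≤ Fintype.card V := fun u => Nat.succ_le_of_lt (f u).2
  have hgpos : ∀ u, 1 ≤ g u := fun u => Nat.le_add_left 1 _
  -- every degree is at least 2
  have hdeg : ∀ v, 2 ≤ G.degree v := by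
    intro v
    by_contra hlt
    push_neg at hlt
    have hw := hf v
    have hle : vertexWeight G g v ≤ G.degree v * Fintype.card V := by
      unfold vertexWeight
      calc ∑ u ∈ Finset.univ.filter (fun u => G.Adj v u), g u
          ≤ ∑ _u ∈ Finset.univ.filter (fun u => G.Adj v u), Fintype.card V :=
            Finset.sum_le_sum (fun u _ => hgle u)
        _ = G.degree v * Fintype.card V := by
            rw [Finset.sum_const, smul_eq_mul, SimpleGraph.degree, neighborFinset_eq_filter']
    rw [hw] at hle
    have : G.degree v * Fintype.card V ≤ Fintype.card V := by
      calc G.degree v * Fintype.card V ≤ 1 * Fintype.card V :=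
            Nat.mul_le_mul_right (Fintype.card V) (by omega)
        _ = Fintype.card V := one_mul _
    omega
  -- total label sum
  have hsumg : 2 * ∑ u, g u = Fintype.card V * (Fintype.card V + 1) := by
    have h1 : ∑ u, g u = ∑ i : Fin (Fintype.card V), ((i : ℕ) + 1) :=
      Equiv.sum_comp f (fun i : Fin (Fintype.card V) => (i : ℕ) + 1)
    rw [h1, Fin.sum_univ_eq_sum_range (fun i => i + 1)]
    have h2 : ∑ i ∈ Finset.range (Fintype.card V), (i + 1)
        = (∑ i ∈ Finset.range (Fintype.card V), i) + Fintype.card V := by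
      rw [Finset.sum_add_distrib, Finset.sum_const, Finset.card_range, smul_eq_mul, mul_one]
    rw [h2]
    generalize Fintype.card V = N
    cases N with
    | zero => simp
    | succ m =>
      have h3 := Finset.sum_range_id_mul_two (m + 1)
      simp only [Nat.add_sub_cancel] at h3
      nlinarith [h3]
  -- double counting
  have hdc : ∑ u, G.degree u * g u = Fintype.card V * (Fintype.card V + 1) := by
    rw [← sum_weights]
    simp only [hf, Finset.sum_const, smul_eq_mul, Finset.card_univ]
  have heq : ∑ u, 2 * g u = ∑ u, G.degree u * g u := by
    rw [hdc, ← hsumg, Finset.mul_sum]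
  have hterm : ∀ u ∈ (Finset.univ : Finset V), 2 * g u ≤ G.degree u * g u :=
    fun u _ => Nat.mul_le_mul_right (g u) (hdeg u)
  have hall := (Finset.sum_eq_sum_iff_of_le hterm).mp heq
  intro v
  have := hall v (Finset.mem_univ v)
  have hpos : 0 < g v := hgpos v
  exact (Nat.eq_of_mul_eq_mul_right hpos this.symm)
end

section
/- The disjoint union of P_3 with t copies of C_4 is a distance magic graph on n = 4t+3 vertices with magic constant n = 4t+3. -/
open Finset
open scoped Classical

private def lab (t : ℕ) : Fin 3 ⊕ Fin t × Fin 4 → ℕ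
  | .inl a => if a.val = 0 then 2 * t else if a.val = 1 then 4 * t + 2 else 2 * t + 1
  | .inr (i, j) =>
      if j.val = 0 then 2 * i.val
      else if j.val = 1 then 2 * i.val + 1
      else if j.val = 2 then 4 * t + 1 - 2 * i.val
      else 4 * t - 2 * i.val

private lemma lab_lt (t : ℕ) (u : Fin 3 ⊕ Fin t × Fin 4) : lab t u < 4 * t + 3 := by
  rcases u with a | ⟨i, j⟩ <;> simp only [lab] <;>
    [skip; have := i.isLt] <;> split_ifs <;> omega

private lemma lab_inj (t : ℕ) : Function.Injective (lab t) := by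
  rintro (a | ⟨i, j⟩) (b | ⟨i', j'⟩) h <;> simp only [lab] at h
  · have ha := a.isLt; have hb := b.isLt
    congr 1; apply Fin.ext; split_ifs at h <;> omega
  · exfalso; have := i'.isLt; have := j'.isLt; have := a.isLt; split_ifs at h <;> omega
  · exfalso; have := i.isLt; have := j.isLt; have := b.isLt; split_ifs at h <;> omega
  · have hi := i.isLt; have hi' := i'.isLt; have hj := j.isLt; have hj' := j'.isLt
    simp only [Sum.inr.injEq, Prod.mk.injEq]
    constructor <;> apply Fin.ext <;> split_ifs at h <;> omega

private lemma weight_eq (t : ℕ) (v : Fin 3 ⊕ Fin t × Fin 4) :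
    vertexWeight (SimpleGraph.pathGraph 3 ⊕g tC4graph t) (fun u => lab t u + 1) v = 4 * t + 3 := by
  rcases v with a | ⟨i, j⟩
  · fin_cases a <;>
    · rw [vertexWeight, Finset.sum_filter, Fintype.sum_sum_type]
      simp [SimpleGraph.sum_adj, SimpleGraph.pathGraph_adj, Fin.sum_univ_three, lab]
      try omega
  · have hi := i.isLt
    rw [vertexWeight, Finset.sum_filter, Fintype.sum_sum_type, Fintype.sum_prod_type]
    fin_cases j <;>
    · simp only [SimpleGraph.sum_adj, tC4graph, Fin.sum_univ_four, Fin.sum_univ_three,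
        ite_and, Finset.sum_add_distrib, Finset.sum_ite_eq, Finset.mem_univ, if_true]
      simp (config := { decide := true }) [lab]
      omega

/-- `P₃ ∪ t C₄` is a distance magic graph on `n = 4t + 3` vertices with magic constant
`n = 4t + 3`. -/
theorem p3_union_tC4_distance_magic (t : ℕ) :
    Fintype.card (Fin 3 ⊕ Fin t × Fin 4) = 4 * t + 3 ∧
      IsDistanceMagic (SimpleGraph.pathGraph 3 ⊕g tC4graph t) (4 * t + 3) := by
  have hcard : Fintype.card (Fin 3 ⊕ Fin t × Fin 4) = 4 * t + 3 := by
    simp [Fintype.card_sum, Fintype.card_prod]; ring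
  refine ⟨hcard, ?_⟩
  have hbij : Function.Bijective (fun u => (⟨lab t u, lab_lt t u⟩ : Fin (4 * t + 3))) := by
    rw [Fintype.bijective_iff_injective_and_card]
    refine ⟨fun u v h => lab_inj t (by simpa [Fin.ext_iff] using h), by simp [hcard]⟩
  refine ⟨(Equiv.ofBijective _ hbij).trans (finCongr hcard.symm), fun v => ?_⟩
  have hf : (fun u => (((Equiv.ofBijective _ hbij).trans (finCongr hcard.symm)) u : ℕ) + 1)
      = fun u => lab t u + 1 := by
    funext u; simp [Equiv.ofBijective]
  rw [hf]
  exact weight_eq t v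
end

section
/- Every odd integer k ≥ 3 is a magic constant, i.e., for every odd k ≥ 3 there exists a distance magic graph with magic constant k. -/
open Finset
open scoped Classical

/-- pair index of a vertex: pairs `a` with `t - a`. -/
def pd (t a : ℕ) : ℕ := min a (t - a)

def adj1 (m : ℕ) (u v : Fin (4*m)) : Prop :=
  pd (4*m-1) (u:ℕ) / 2 = pd (4*m-1) (v:ℕ) / 2 ∧ pd (4*m-1) (u:ℕ) ≠ pd (4*m-1) (v:ℕ)

def g1 (m : ℕ) : SimpleGraph (Fin (4*m)) where
  Adj := adj1 m
  symm := ⟨by intro u v h; unfold adj1 pd at h ⊢; omega⟩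
  loopless := ⟨by intro u h; unfold adj1 pd at h; omega⟩

lemma g1_adj (m : ℕ) (u v : Fin (4*m)) : (g1 m).Adj u v ↔ adj1 m u v := Iff.rfl

def adj2 (m : ℕ) (u v : Fin (4*m+3)) : Prop :=
  ((u:ℕ) = 4*m+2 ∧ ((v:ℕ) = 2*m ∨ (v:ℕ) = 2*m+1)) ∨
  (((u:ℕ) = 2*m ∨ (u:ℕ) = 2*m+1) ∧ (v:ℕ) = 4*m+2) ∨
  ((u:ℕ) ≠ 2*m ∧ (u:ℕ) ≠ 2*m+1 ∧ (u:ℕ) ≠ 4*m+2 ∧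
   (v:ℕ) ≠ 2*m ∧ (v:ℕ) ≠ 2*m+1 ∧ (v:ℕ) ≠ 4*m+2 ∧
   pd (4*m+1) (u:ℕ) / 2 = pd (4*m+1) (v:ℕ) / 2 ∧ pd (4*m+1) (u:ℕ) ≠ pd (4*m+1) (v:ℕ))

def g2 (m : ℕ) : SimpleGraph (Fin (4*m+3)) where
  Adj := adj2 m
  symm := ⟨by intro u v h; unfold adj2 pd at h ⊢; omega⟩
  loopless := ⟨by intro u h; unfold adj2 pd at h; omega⟩

lemma g2_adj (m : ℕ) (u v : Fin (4*m+3)) : (g2 m).Adj u v ↔ adj2 m u v := Iff.rfl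

/-- Every odd integer `k ≥ 3` is a magic constant. -/
theorem odd_is_magic_constant (k : ℕ) (hk : 3 ≤ k) (hodd : Odd k) :
    IsMagicConstant k := by
  obtain ⟨j, hj⟩ := hodd
  rcases Nat.even_or_odd j with he | ho
  · -- k = 4m+1 with m ≥ 1
    obtain ⟨m, hm⟩ := he
    have hm1 : 1 ≤ m := by omega
    refine ⟨4*m, by omega, g1 m, finCongr (Fintype.card_fin (4*m)).symm, ?_⟩
    rintro ⟨a, ha⟩
    have hp : pd (4*m-1) a < 2*m := by unfold pd; omega
    obtain ⟨q, hq1, hq2, hq3⟩ :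
        ∃ q, q < 2*m ∧ q / 2 = pd (4*m-1) a / 2 ∧ q ≠ pd (4*m-1) a := by
      refine ⟨if pd (4*m-1) a % 2 = 0 then pd (4*m-1) a + 1 else pd (4*m-1) a - 1, ?_⟩
      unfold pd at hp ⊢; split <;> omega
    have hqlt : q < 4*m := by omega
    have hqlt2 : 4*m-1-q < 4*m := by omega
    have hxy : (⟨q, hqlt⟩ : Fin (4*m)) ≠ ⟨4*m-1-q, hqlt2⟩ := by
      simp only [ne_eq, Fin.mk.injEq]; omega
    have hfilt : Finset.univ.filter (fun u => (g1 m).Adj ⟨a, ha⟩ u)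
        = ({⟨q, hqlt⟩, ⟨4*m-1-q, hqlt2⟩} : Finset (Fin (4*m))) := by
      ext ⟨b, hb⟩
      simp only [Finset.mem_filter, Finset.mem_univ, true_and, g1_adj, adj1, pd,
        Finset.mem_insert, Finset.mem_singleton, Fin.mk.injEq]
      unfold pd at hp hq2 hq3
      omega
    unfold vertexWeight
    rw [hfilt, Finset.sum_pair hxy]
    simp only [finCongr_apply, Fin.coe_cast]
    unfold pd at hp
    omega
  · -- k = 4m+3
    obtain ⟨m, hm⟩ := ho
    refine ⟨4*m+3, by omega, g2 m, finCongr (Fintype.card_fin (4*m+3)).symm, ?_⟩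
    rintro ⟨a, ha⟩
    by_cases hc : a = 4*m+2
    · have h1 : 2*m < 4*m+3 := by omega
      have h2 : 2*m+1 < 4*m+3 := by omega
      have hxy : (⟨2*m, h1⟩ : Fin (4*m+3)) ≠ ⟨2*m+1, h2⟩ := by
        simp only [ne_eq, Fin.mk.injEq]; omega
      have hfilt : Finset.univ.filter (fun u => (g2 m).Adj ⟨a, ha⟩ u)
          = ({⟨2*m, h1⟩, ⟨2*m+1, h2⟩} : Finset (Fin (4*m+3))) := by
        ext ⟨b, hb⟩
        simp only [Finset.mem_filter, Finset.mem_univ, true_and, g2_adj, adj2, pd,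
          Finset.mem_insert, Finset.mem_singleton, Fin.mk.injEq]
        omega
      unfold vertexWeight
      rw [hfilt, Finset.sum_pair hxy]
      simp only [finCongr_apply, Fin.coe_cast]
      omega
    · by_cases hl : a = 2*m ∨ a = 2*m+1
      · have h3 : 4*m+2 < 4*m+3 := by omega
        have hfilt : Finset.univ.filter (fun u => (g2 m).Adj ⟨a, ha⟩ u)
            = ({⟨4*m+2, h3⟩} : Finset (Fin (4*m+3))) := by
          ext ⟨b, hb⟩
          simp only [Finset.mem_filter, Finset.mem_univ, true_and, g2_adj, adj2, pd,
            Finset.mem_singleton, Fin.mk.injEq]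
          omega
        unfold vertexWeight
        rw [hfilt, Finset.sum_singleton]
        simp only [finCongr_apply, Fin.coe_cast]
        omega
      · push_neg at hl
        obtain ⟨hl1, hl2⟩ := hl
        have hp : pd (4*m+1) a < 2*m := by unfold pd; omega
        obtain ⟨q, hq1, hq2, hq3⟩ :
            ∃ q, q < 2*m ∧ q / 2 = pd (4*m+1) a / 2 ∧ q ≠ pd (4*m+1) a := by
          refine ⟨if pd (4*m+1) a % 2 = 0 then pd (4*m+1) a + 1 else pd (4*m+1) a - 1, ?_⟩
          unfold pd at hp ⊢; split <;> omega
        have hqlt : q < 4*m+3 := by omega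
        have hqlt2 : 4*m+1-q < 4*m+3 := by omega
        have hxy : (⟨q, hqlt⟩ : Fin (4*m+3)) ≠ ⟨4*m+1-q, hqlt2⟩ := by
          simp only [ne_eq, Fin.mk.injEq]; omega
        have hfilt : Finset.univ.filter (fun u => (g2 m).Adj ⟨a, ha⟩ u)
            = ({⟨q, hqlt⟩, ⟨4*m+1-q, hqlt2⟩} : Finset (Fin (4*m+3))) := by
          ext ⟨b, hb⟩
          simp only [Finset.mem_filter, Finset.mem_univ, true_and, g2_adj, adj2, pd,
            Finset.mem_insert, Finset.mem_singleton, Fin.mk.injEq]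
          unfold pd at hp hq2 hq3
          omega
        unfold vertexWeight
        rw [hfilt, Finset.sum_pair hxy]
        simp only [finCongr_apply, Fin.coe_cast]
        unfold pd at hp
        omega
end

section
/- For every t ≥ 3, the integer 4t+2 is a magic constant. -/
open Finset
open scoped Classical

/-- The pair index of a vertex of `Fin (2*t)`: vertices `v` and `2*t-1-v` are paired, and
their labels `v+1` and `2*t-v` sum to `2*t+1`. -/
def pidx (t : ℕ) (v : Fin (2*t)) : ℕ := min v.val (2*t - 1 - v.val)

lemma pidx_lt (t : ℕ) (v : Fin (2*t)) : pidx t v < t := by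
  have := v.isLt; unfold pidx; omega

/-- The graph `C_t[K̄_2]`: two vertices are adjacent iff their pair indices are consecutive
on a cycle of length `t` (guarded by `3 ≤ t`). -/
def magicG (t : ℕ) : SimpleGraph (Fin (2*t)) where
  Adj u v := 3 ≤ t ∧ (pidx t u + 1 = pidx t v ∨ pidx t v + 1 = pidx t u ∨
    (pidx t u = 0 ∧ pidx t v = t-1) ∨ (pidx t v = 0 ∧ pidx t u = t-1))
  symm := by constructor; intro u v h; exact ⟨h.1, by tauto⟩
  loopless := by
    constructor
    intro v h
    have := pidx_lt t v
    obtain ⟨ht, h⟩ := h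
    omega

lemma neighbors_eq (t : ℕ) (ht : 3 ≤ t) (v : Fin (2*t)) :
    Finset.univ.filter (fun u => (magicG t).Adj v u) =
      ({⟨if pidx t v + 1 = t then 0 else pidx t v + 1, by have := pidx_lt t v; split <;> omega⟩,
        ⟨2*t - 1 - (if pidx t v + 1 = t then 0 else pidx t v + 1), by have := pidx_lt t v; split <;> omega⟩,
        ⟨if pidx t v = 0 then t - 1 else pidx t v - 1, by have := pidx_lt t v; split <;> omega⟩,
        ⟨2*t - 1 - (if pidx t v = 0 then t - 1 else pidx t v - 1), by have := pidx_lt t v; split <;> omega⟩} :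
        Finset (Fin (2*t))) := by
  ext u
  have hv := pidx_lt t v
  have hu := pidx_lt t u
  have hul := u.isLt
  simp only [mem_filter, mem_univ, true_and, mem_insert, mem_singleton, Fin.ext_iff] at *
  simp only [magicG, pidx] at *
  constructor
  · rintro ⟨-, h⟩
    by_cases h1 : min v.val (2 * t - 1 - v.val) + 1 = t <;> by_cases h2 : min v.val (2 * t - 1 - v.val) = 0 <;> simp only [h1, h2, (show ¬ 0 + 1 = t by omega), if_true, if_false] <;> omega
  · intro h
    refine ⟨ht, ?_⟩
    by_cases h1 : min v.val (2 * t - 1 - v.val) + 1 = t <;> by_cases h2 : min v.val (2 * t - 1 - v.val) = 0 <;> simp only [h1, h2, (show ¬ 0 + 1 = t by omega), if_true, if_false] at h <;> omega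

lemma magicG_weight (t : ℕ) (ht : 3 ≤ t) (v : Fin (2*t)) :
    ∑ u ∈ Finset.univ.filter (fun u => (magicG t).Adj v u), (u.val + 1) = 4*t+2 := by
  rw [neighbors_eq t ht v]
  have hv := pidx_lt t v
  rw [Finset.sum_insert (by simp [Fin.ext_iff]; split_ifs <;> omega),
      Finset.sum_insert (by simp [Fin.ext_iff]; split_ifs <;> omega),
      Finset.sum_insert (by simp [Fin.ext_iff]; split_ifs <;> omega),
      Finset.sum_singleton]
  simp only [Fin.val_mk]
  split_ifs <;> omega

/-- For every `t ≥ 3`, `4t + 2` is a magic constant. -/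
theorem four_t_add_two_is_magic_constant (t : ℕ) (ht : 3 ≤ t) :
    IsMagicConstant (4 * t + 2) := by
  refine ⟨2*t, by omega, magicG t, finCongr (Fintype.card_fin (2*t)).symm, fun v => ?_⟩
  unfold vertexWeight
  simpa using magicG_weight t ht v
end
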